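/- arXiv:1701.08652 — 9 statements merged into one kernel-verified Lean document; each statement's English description precedes it below -/
import Mathlib

section
/- For every n ≥ 2, the product over all cells (i,j) with 1 ≤ i ≤ n and 1 ≤ j ≤ n+1-i of c_n(i,j)/h_n(i,j), where c_n(i,j) = n-i+j and h_n(i,j) = 2(n-i-j)+3, equals 2^(n choose 2). -/
lemma gh (m : ℕ) : ∏ k ∈ Finset.range (m+1), ((m:ℚ)+1+k)
    = 2^m * ∏ k ∈ Finset.range (m+1), (2*((m:ℚ)-k)+1) := by
  induction m with
  | zero => norm_num
  | succ m ih =>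
    have h1 : ∏ k ∈ Finset.range (m+2), ((m:ℚ)+1+k)
        = (∏ k ∈ Finset.range (m+1), ((m:ℚ)+2+k)) * ((m:ℚ)+1) := by
      rw [Finset.prod_range_succ']
      push_cast
      ring_nf
    have h2 : ∏ k ∈ Finset.range (m+2), ((m:ℚ)+1+k)
        = (∏ k ∈ Finset.range (m+1), ((m:ℚ)+1+k)) * ((m:ℚ)+1) * 2 := by
      rw [Finset.prod_range_succ]
      push_cast
      ring
    have hm : ((m:ℚ)+1) ≠ 0 := by positivity
    have hg' : ∏ k ∈ Finset.range (m+1), ((m:ℚ)+2+k)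
        = 2 * ∏ k ∈ Finset.range (m+1), ((m:ℚ)+1+k) := by
      have h := h1.symm.trans h2
      exact mul_right_cancel₀ hm (by linear_combination h)
    have h3 : ∏ k ∈ Finset.range (m+2), (2*(((m:ℚ)+1)-k)+1)
        = (∏ k ∈ Finset.range (m+1), (2*((m:ℚ)-k)+1)) * (2*(m:ℚ)+3) := by
      rw [Finset.prod_range_succ']
      have e : ∀ x ∈ Finset.range (m+1), (2*(((m:ℚ)+1)-((x+1:ℕ):ℚ))+1) = 2*((m:ℚ)-x)+1 :=
        fun x _ => by push_cast; ring
      rw [Finset.prod_congr rfl e]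
      push_cast; ring
    have ebody : ∏ k ∈ Finset.range (m+1), (((m+1:ℕ):ℚ)+1+k)
        = ∏ k ∈ Finset.range (m+1), ((m:ℚ)+2+k) :=
      Finset.prod_congr rfl fun x _ => by push_cast; ring
    have eRbody : ∏ k ∈ Finset.range (m+2), (2*(((m+1:ℕ):ℚ)-k)+1)
        = ∏ k ∈ Finset.range (m+2), (2*(((m:ℚ)+1)-k)+1) :=
      Finset.prod_congr rfl fun x _ => by push_cast; ring
    calc ∏ k ∈ Finset.range (m+1+1), (((m+1:ℕ):ℚ)+1+k)
        = (∏ k ∈ Finset.range (m+1), ((m:ℚ)+2+k)) * (((m+1:ℕ):ℚ)+1+(m+1:ℕ)) := by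
          rw [Finset.prod_range_succ, ebody]
      _ = 2^(m+1) * ((∏ k ∈ Finset.range (m+1), (2*((m:ℚ)-k)+1)) * (2*(m:ℚ)+3)) := by
          rw [hg', ih]; push_cast; ring
      _ = 2^(m+1) * ∏ k ∈ Finset.range (m+1+1), (2*(((m+1:ℕ):ℚ)-k)+1) := by
          rw [eRbody, h3]

lemma inner (m : ℕ) : ∏ j ∈ Finset.Icc 1 (m+1), (((m:ℚ)+j) / (2*((m:ℚ)-j)+3)) = 2^m := by
  have hne : ∏ k ∈ Finset.range (m+1), (2*((m:ℚ)-k)+1) ≠ 0 := by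
    apply Finset.prod_ne_zero_iff.2
    intro k hk
    have : (k:ℚ) ≤ m := by exact_mod_cast Nat.le_of_lt_succ (Finset.mem_range.1 hk)
    nlinarith
  rw [← Finset.Ico_add_one_right_eq_Icc, Finset.prod_Ico_eq_prod_range]
  norm_num
  have e1 : ∏ x ∈ Finset.range (m+1), ((m:ℚ)+(1+x)) = ∏ x ∈ Finset.range (m+1), ((m:ℚ)+1+x) :=
    Finset.prod_congr rfl fun x _ => by ring
  have e2 : ∏ x ∈ Finset.range (m+1), (2*((m:ℚ)-(1+x))+3) = ∏ x ∈ Finset.range (m+1), (2*((m:ℚ)-x)+1) :=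
    Finset.prod_congr rfl fun x _ => by ring
  rw [e1, e2, gh, mul_div_assoc, div_self hne, mul_one]

/-- For every `n ≥ 2`, the product over all staircase cells `(i, j)` with
`1 ≤ i ≤ n` and `1 ≤ j ≤ n + 1 - i` of the ratio of the hook content
`c_n(i,j) = n - i + j` to the hook length `h_n(i,j) = 2(n - i - j) + 3`
equals `2^(n choose 2)`. -/
theorem hook_content_formula_staircase (n : ℕ) (hn : 2 ≤ n) :
    ∏ i ∈ Finset.Icc 1 n, ∏ j ∈ Finset.Icc 1 (n + 1 - i),
      (((n : ℚ) - i + j) / (2 * ((n : ℚ) - i - j) + 3)) = 2 ^ n.choose 2 := by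
  have key : ∀ i ∈ Finset.Icc 1 n, ∏ j ∈ Finset.Icc 1 (n + 1 - i),
      (((n : ℚ) - i + j) / (2 * ((n : ℚ) - i - j) + 3)) = 2 ^ (n - i) := by
    intro i hi
    obtain ⟨h1, h2⟩ := Finset.mem_Icc.1 hi
    have hc : ((n:ℚ) - i) = ((n - i : ℕ) : ℚ) := by
      push_cast [Nat.cast_sub h2]; ring
    have hb : n + 1 - i = (n - i) + 1 := by omega
    rw [hb]
    rw [← inner (n - i)]
    exact Finset.prod_congr rfl fun j _ => by rw [hc]
  rw [Finset.prod_congr rfl key, Finset.prod_pow_eq_pow_sum]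
  congr 1
  have : ∑ i ∈ Finset.Icc 1 n, (n - i) = ∑ i ∈ Finset.range n, i := by
    rw [← Finset.Ico_add_one_right_eq_Icc, Finset.sum_Ico_eq_sum_range]
    norm_num
    rw [← Finset.sum_range_reflect]
    exact Finset.sum_congr rfl fun x hx => by
      have := Finset.mem_range.1 hx; omega
  rw [this, Finset.sum_range_id, Nat.choose_two_right]
end

section
/- In any single-peaked narcissistic preference profile on a set V of n ≥ 2 voters (who are also the alternatives), there exist two voters i and j whose preference orders are exact reverses of each other, i.e., the set of pairs of alternatives ordered differently by ≻_i and ≻_j has cardinality (n choose 2). -/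
/-- Voter with ranking equiv `p` (alternative ↦ position) prefers `a` to `b`. -/
def prefers {n : ℕ} (p : Fin n ≃ Fin n) (a b : Fin n) : Prop :=
  p a < p b

/-- A profile is narcissistic if every voter ranks herself first. -/
def Narcissistic {n : ℕ} (P : Fin n → Fin n ≃ Fin n) : Prop :=
  ∀ i a, a ≠ i → prefers (P i) i a

/-- Single-peakedness of a profile with respect to a strict order `lt` on alternatives:
for every voter `i` with peak `c` (the alternative ranked first by `i`),
if `lt a b ∧ lt b c` or `lt c b ∧ lt b a` then voter `i` prefers `b` to `a`. -/
def SinglePeakedWrt {m n : ℕ} (P : Fin m → Fin n ≃ Fin n)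
    (lt : Fin n → Fin n → Prop) : Prop :=
  ∀ (i : Fin m) (c a b : Fin n), (∀ x, x ≠ c → prefers (P i) c x) →
    ((lt a b ∧ lt b c) ∨ (lt c b ∧ lt b a)) → prefers (P i) b a

/-- Single-crossingness of a profile with respect to a strict order `lt` on voters. -/
def SingleCrossingWrt {m n : ℕ} (P : Fin m → Fin n ≃ Fin n)
    (lt : Fin m → Fin m → Prop) : Prop :=
  ∀ (a b : Fin n) (i j k : Fin m), lt i j → lt j k →
    prefers (P i) a b → prefers (P k) a b → prefers (P j) a b

/-- `T` is a semi-standard Young tableau of (staircase) order `n`: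
the valid cells are the `(i, j)` (0-indexed) with `i + j < n` (so row `i` has `n - i`
entries, entries being elements of `Fin n`, i.e. of `{1,…,n}`), entries weakly increase
along rows and strictly increase down columns; entries outside the staircase are `0`. -/
def IsSSYT (n : ℕ) (T : Fin n → Fin n → Fin n) : Prop :=
  (∀ i j j' : Fin n, j ≤ j' → (i : ℕ) + (j' : ℕ) < n → T i j ≤ T i j') ∧
  (∀ i i' j : Fin n, i < i' → (i' : ℕ) + (j : ℕ) < n → T i j < T i' j) ∧
  (∀ i j : Fin n, n ≤ (i : ℕ) + (j : ℕ) → (T i j : ℕ) = 0)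

lemma card_lt_pairs (n : ℕ) :
    Nat.card {p : Fin n × Fin n // p.1 < p.2} = n.choose 2 := by
  have e : {p : Fin n × Fin n // p.1 < p.2} ≃ Σ b : Fin n, Fin (b : ℕ) :=
    { toFun := fun p => ⟨p.1.2, ⟨p.1.1, p.2⟩⟩
      invFun := fun x => ⟨(⟨(x.2 : ℕ), lt_trans x.2.2 x.1.2⟩, x.1), x.2.2⟩
      left_inv := fun p => by ext <;> rfl
      right_inv := fun x => by rfl }
  rw [Nat.card_congr e, Nat.card_eq_fintype_card, Fintype.card_sigma]
  simp only [Fintype.card_fin]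
  rw [Fin.sum_univ_eq_sum_range (fun x => x), Finset.sum_range_id, Nat.choose_two_right]

/-- In any single-peaked narcissistic profile on `n ≥ 2` voters (who are also the
alternatives), there are two voters `i ≠ j` whose preference orders are exact reverses
of each other: the number of pairs of alternatives on which they disagree is
`n choose 2` (each unordered pair `{a, b}` ordered differently by `≻ᵢ` and `≻ⱼ` is
counted once, as the ordered pair `(a, b)` with `a ≻ᵢ b` and `b ≻ⱼ a`). -/
theorem spn_reverse_pair_exists (n : ℕ) (hn : 2 ≤ n)
    (P : Fin n → Fin n ≃ Fin n)
    (hnar : Narcissistic P)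
    (hsp : ∃ σ : Fin n ≃ Fin n, SinglePeakedWrt P (fun a b => σ a < σ b)) :
    ∃ i j : Fin n, i ≠ j ∧
      Nat.card {p : Fin n × Fin n //
        prefers (P i) p.1 p.2 ∧ prefers (P j) p.2 p.1} = n.choose 2 := by
  obtain ⟨σ, hsp⟩ := hsp
  set i : Fin n := σ.symm ⟨0, by omega⟩ with hi
  set j : Fin n := σ.symm ⟨n - 1, by omega⟩ with hj
  have hσi : (σ i : ℕ) = 0 := by simp [hi]
  have hσj : (σ j : ℕ) = n - 1 := by simp [hj]
  have hij : i ≠ j := by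
    intro h
    rw [h, hσj] at hσi
    omega
  have hpeaki : ∀ x, x ≠ i → prefers (P i) i x := fun x hx => hnar i x hx
  have hpeakj : ∀ x, x ≠ j → prefers (P j) j x := fun x hx => hnar j x hx
  -- voter i ranks by increasing σ-position
  have key1 : ∀ a b : Fin n, (σ a : ℕ) < (σ b : ℕ) → prefers (P i) a b := by
    intro a b hab
    by_cases ha : a = i
    · rw [ha]
      apply hnar i b
      intro h
      rw [ha, h] at hab; omega
    · have h0 : (σ i : ℕ) < (σ a : ℕ) := by
        have : σ a ≠ σ i := fun h => ha (σ.injective h)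
        have := Fin.val_ne_of_ne this
        omega
      exact hsp i i b a hpeaki (Or.inr ⟨h0, hab⟩)
  -- voter j ranks by decreasing σ-position
  have key2 : ∀ a b : Fin n, (σ a : ℕ) < (σ b : ℕ) → prefers (P j) b a := by
    intro a b hab
    by_cases hb : b = j
    · rw [hb]
      apply hnar j a
      intro h
      rw [hb, h] at hab; omega
    · have h0 : (σ b : ℕ) < (σ j : ℕ) := by
        have : σ b ≠ σ j := fun h => hb (σ.injective h)
        have h1 := Fin.val_ne_of_ne this
        have h2 : (σ b : ℕ) < n := (σ b).isLt
        omega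
      exact hsp j j a b hpeakj (Or.inl ⟨hab, h0⟩)
  have iff1 : ∀ a b : Fin n, prefers (P i) a b ↔ (σ a : ℕ) < (σ b : ℕ) := by
    intro a b
    refine ⟨fun h => ?_, key1 a b⟩
    rcases lt_trichotomy ((σ a : ℕ)) ((σ b : ℕ)) with h' | h' | h'
    · exact h'
    · have : a = b := σ.injective (Fin.val_injective h')
      rw [this] at h
      exact absurd h (lt_irrefl _)
    · exfalso
      have h2 := key1 b a h'
      simp only [prefers, Fin.lt_def] at h h2
      omega
  have iff2 : ∀ a b : Fin n, prefers (P j) b a ↔ (σ a : ℕ) < (σ b : ℕ) := by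
    intro a b
    refine ⟨fun h => ?_, key2 a b⟩
    rcases lt_trichotomy ((σ a : ℕ)) ((σ b : ℕ)) with h' | h' | h'
    · exact h'
    · have : a = b := σ.injective (Fin.val_injective h')
      rw [this] at h
      exact absurd h (lt_irrefl _)
    · exfalso
      have h2 := key2 b a h'
      simp only [prefers, Fin.lt_def] at h h2
      omega
  refine ⟨i, j, hij, ?_⟩
  have e : {p : Fin n × Fin n // prefers (P i) p.1 p.2 ∧ prefers (P j) p.2 p.1} ≃
      {p : Fin n × Fin n // p.1 < p.2} :=
    Equiv.subtypeEquiv (Equiv.prodCongr σ σ) (by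
      intro p
      simp only [Equiv.prodCongr_apply, Prod.map_fst, Prod.map_snd]
      rw [iff1, iff2, Fin.lt_def]
      tauto)
  rw [Nat.card_congr e, card_lt_pairs]
end

section
/- The number of single-peaked narcissistic preference profiles on n ≥ 2 voters, up to renaming of voters (equivalently, profiles narcissistic and single-peaked with respect to the fixed order 1 ▷ 2 ▷ ... ▷ n in which voter 1 has order 1 ≻ 2 ≻ ... ≻ n and voter n has the reverse), equals the product over i from 2 to n-1 of binom(n-1, i-1). -/
open Finset


section Aux

variable {n : ℕ}

/-- `q` (alternative ↦ position) is a single-peaked linear order with peak `c`. -/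
def Good (c : Fin n) (q : Fin n ≃ Fin n) : Prop :=
  ∀ a b : Fin n, a < b → (b ≤ c → q b < q a) ∧ (c ≤ a → q a < q b)

lemma Good.peak {c : Fin n} {q : Fin n ≃ Fin n} (h : Good c q) :
    ∀ x, x ≠ c → q c < q x := by
  intro x hx
  rcases lt_or_gt_of_ne hx with h1 | h1
  · exact (h x c h1).1 le_rfl
  · exact (h c x h1).2 le_rfl

lemma Good.qc_val {c : Fin n} {q : Fin n ≃ Fin n} (h : Good c q) : ((q c : Fin n) : ℕ) = 0 := by
  have hn0 : 0 < n := c.pos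
  obtain ⟨x, hx⟩ := q.surjective ⟨0, hn0⟩
  rcases eq_or_ne x c with rfl | hxc
  · rw [hx]
  · have h2 := h.peak x hxc
    rw [hx] at h2
    have h3 := Fin.lt_def.mp h2
    have h4 : ((⟨0, hn0⟩ : Fin n) : ℕ) = 0 := rfl
    omega

end Aux

section CountGood

variable {n : ℕ}

lemma card_good (c : Fin n) :
    Nat.card {q : Fin n ≃ Fin n // Good c q} = (n - 1).choose c := by
  classical
  have hn0 : 0 < n := c.pos
  -- the target finset family
  set S : Finset (Finset (Fin n)) :=
    ((univ : Finset (Fin n)).erase ⟨0, hn0⟩).powersetCard (c : ℕ) with hS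
  -- the map from Good orders to finsets
  have key : Nat.card {q : Fin n ≃ Fin n // Good c q} = Nat.card {T // T ∈ S} := by
    apply Nat.card_congr
    refine Equiv.ofBijective (fun q => ⟨(Finset.Iio c).image q.1, ?_⟩) ⟨?_, ?_⟩
    · -- membership in S
      rcases q with ⟨q, hq⟩
      rw [hS, Finset.mem_powersetCard]
      constructor
      · intro x hx
        simp only [Finset.mem_image, Finset.mem_Iio] at hx
        obtain ⟨a, ha, rfl⟩ := hx
        refine Finset.mem_erase.2 ⟨?_, Finset.mem_univ _⟩
        intro h0
        have hqa : q a = q c := Fin.ext (by rw [hq.qc_val, h0])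
        exact absurd (q.injective hqa) (ne_of_lt ha)
      · rw [Finset.card_image_of_injective _ q.injective, Fin.card_Iio]
    · -- injectivity
      rintro ⟨q, hq⟩ ⟨q', hq'⟩ hT
      simp only [Subtype.mk.injEq] at hT ⊢
      set T : Finset (Fin n) := (Finset.Iio c).image q with hTdef
      have hT' : (Finset.Iio c).image q'.1 = T := hT.symm
      have hTcard : T.card = (c : ℕ) := by
        rw [hTdef, Finset.card_image_of_injective _ q.injective, Fin.card_Iio]
      set U : Finset (Fin n) := (insert (⟨0, hn0⟩ : Fin n) T)ᶜ with hUdef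
      have h0T : (⟨0, hn0⟩ : Fin n) ∉ T := by
        rw [hTdef]
        simp only [Finset.mem_image, Finset.mem_Iio, not_exists]
        rintro a ⟨ha, ha0⟩
        have hqa : q a = q c := Fin.ext (by rw [hq.qc_val, ha0])
        exact absurd (q.injective hqa) (ne_of_lt ha)
      have hUcard : U.card = n - ((c : ℕ) + 1) := by
        rw [hUdef, Finset.card_compl, Finset.card_insert_of_notMem h0T, hTcard]
        simp
      -- abstract uniqueness argument applied to both q and q'
      have main : ∀ (r : Fin n ≃ Fin n), Good c r → (Finset.Iio c).image r.1 = T →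
          ∀ x : Fin n,
            r x = if h : x < c then (T.orderEmbOfFin hTcard
                    ⟨(c : ℕ) - 1 - (x : ℕ), by
                      have := Fin.lt_def.mp h; omega⟩ : Fin n)
              else if h' : c < x then (U.orderEmbOfFin hUcard
                    ⟨(x : ℕ) - (c : ℕ) - 1, by
                      have := Fin.lt_def.mp h'; have := x.isLt; omega⟩ : Fin n)
              else ⟨0, hn0⟩ := by
        intro r hr hrT x
        have hc1 : 1 ≤ (c : ℕ) ∨ True := Or.inr trivial
        -- the "left" function
        have hrc0 : r c = ⟨0, hn0⟩ := Fin.ext hr.qc_val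
        have hrnotT : ∀ a : Fin n, c < a → r a ∉ T := by
          intro a ha hmem
          rw [← hrT] at hmem
          simp only [Finset.mem_image, Finset.mem_Iio] at hmem
          obtain ⟨b, hb, hba⟩ := hmem
          have := r.injective hba
          subst this
          exact absurd ha (not_lt.2 (le_of_lt hb))
        have hrne0 : ∀ a : Fin n, c < a → r a ≠ ⟨0, hn0⟩ := by
          intro a ha h0
          rw [← hrc0] at h0
          have := r.injective h0
          subst this
          exact lt_irrefl _ ha
        rcases lt_trichotomy x c with hx | hx | hx
        · -- left part
          rw [dif_pos hx]
          have hxc := Fin.lt_def.mp hx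
          have hfl : (fun i : Fin (c : ℕ) =>
              r ⟨(c : ℕ) - 1 - (i : ℕ), by have := c.isLt; omega⟩) =
              T.orderEmbOfFin hTcard := by
            apply Finset.orderEmbOfFin_unique
            · intro i
              rw [← hrT]
              exact Finset.mem_image_of_mem _ (Finset.mem_Iio.2 (by
                rw [Fin.lt_def]; simp; omega))
            · intro i j hij
              have hij' : (i : ℕ) < j := hij
              have hab : (⟨(c:ℕ) - 1 - (j:ℕ), by have := c.isLt; omega⟩ : Fin n) <
                  ⟨(c:ℕ) - 1 - (i:ℕ), by have := c.isLt; omega⟩ := by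
                rw [Fin.lt_def]; simp; omega
              have hbc : (⟨(c:ℕ) - 1 - (i:ℕ), by have := c.isLt; omega⟩ : Fin n) ≤ c := by
                rw [Fin.le_def]; simp; omega
              exact (hr _ _ hab).1 hbc
          have hx' : x = ⟨(c : ℕ) - 1 - ((c : ℕ) - 1 - (x : ℕ)), by have := c.isLt; omega⟩ := by
            apply Fin.ext; simp; omega
          calc r x = r ⟨(c : ℕ) - 1 - ((c : ℕ) - 1 - (x : ℕ)), by have := c.isLt; omega⟩ := by
                rw [← hx']
            _ = (T.orderEmbOfFin hTcard ⟨(c : ℕ) - 1 - (x : ℕ), by omega⟩ : Fin n) := by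
                have := congrFun hfl ⟨(c : ℕ) - 1 - (x : ℕ), by omega⟩
                simpa using this
        · -- peak
          subst hx
          rw [dif_neg (lt_irrefl _), dif_neg (lt_irrefl _), hrc0]
        · -- right part
          rw [dif_neg (not_lt.2 (le_of_lt hx)), dif_pos hx]
          have hxc := Fin.lt_def.mp hx
          have hfr : (fun i : Fin (n - ((c : ℕ) + 1)) =>
              r ⟨(c : ℕ) + 1 + (i : ℕ), by have := i.isLt; omega⟩) =
              U.orderEmbOfFin hUcard := by
            apply Finset.orderEmbOfFin_unique
            · intro i
              rw [hUdef, Finset.mem_compl, Finset.mem_insert]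
              push_neg
              have hci : c < (⟨(c : ℕ) + 1 + (i : ℕ), by have := i.isLt; omega⟩ : Fin n) := by
                rw [Fin.lt_def]; simp; omega
              exact ⟨hrne0 _ hci, hrnotT _ hci⟩
            · intro i j hij
              have hij' : (i : ℕ) < j := hij
              have hab : (⟨(c:ℕ) + 1 + (i:ℕ), by have := i.isLt; omega⟩ : Fin n) <
                  ⟨(c:ℕ) + 1 + (j:ℕ), by have := j.isLt; omega⟩ := by
                rw [Fin.lt_def]; simp; omega
              have hca : c ≤ (⟨(c:ℕ) + 1 + (i:ℕ), by have := i.isLt; omega⟩ : Fin n) := by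
                rw [Fin.le_def]; simp; omega
              exact (hr _ _ hab).2 hca
          have hx' : x = ⟨(c : ℕ) + 1 + ((x : ℕ) - (c : ℕ) - 1), by have := x.isLt; omega⟩ := by
            apply Fin.ext; simp; omega
          calc r x = r ⟨(c : ℕ) + 1 + ((x : ℕ) - (c : ℕ) - 1), by have := x.isLt; omega⟩ := by
                rw [← hx']
            _ = (U.orderEmbOfFin hUcard ⟨(x : ℕ) - (c : ℕ) - 1, by
                  have := x.isLt; omega⟩ : Fin n) := by
                have := congrFun hfr ⟨(x : ℕ) - (c : ℕ) - 1, by have := x.isLt; omega⟩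
                simpa using this
      have := main q hq rfl
      have := main q' hq' hT'
      apply Equiv.ext
      intro x
      rw [main q hq rfl x, main q' hq' hT' x]
    · -- surjectivity
      rintro ⟨T, hTS⟩
      rw [hS, Finset.mem_powersetCard] at hTS
      obtain ⟨hTsub, hTcard⟩ := hTS
      have h0T : (⟨0, hn0⟩ : Fin n) ∉ T := fun h => (Finset.mem_erase.1 (hTsub h)).1 rfl
      set U : Finset (Fin n) := (insert (⟨0, hn0⟩ : Fin n) T)ᶜ with hUdef
      have hUcard : U.card = n - ((c : ℕ) + 1) := by
        rw [hUdef, Finset.card_compl, Finset.card_insert_of_notMem h0T, hTcard]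
        simp
      set f : Fin n → Fin n := fun x =>
        if h : x < c then (T.orderEmbOfFin hTcard
              ⟨(c : ℕ) - 1 - (x : ℕ), by have := Fin.lt_def.mp h; omega⟩ : Fin n)
        else if h' : c < x then (U.orderEmbOfFin hUcard
              ⟨(x : ℕ) - (c : ℕ) - 1, by
                have := Fin.lt_def.mp h'; have := x.isLt; omega⟩ : Fin n)
        else ⟨0, hn0⟩ with hfdef
      have hfT : ∀ x : Fin n, x < c → f x ∈ T := by
        intro x hx
        rw [hfdef]; simp only [dif_pos hx]
        exact Finset.orderEmbOfFin_mem _ _ _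
      have hfU : ∀ x : Fin n, c < x → f x ∈ U := by
        intro x hx
        rw [hfdef]
        simp only [dif_neg (not_lt.2 (le_of_lt hx)), dif_pos hx]
        exact Finset.orderEmbOfFin_mem _ _ _
      have hfc : f c = ⟨0, hn0⟩ := by
        rw [hfdef]; simp only [dif_neg (lt_irrefl _)]
      have hU0 : (⟨0, hn0⟩ : Fin n) ∉ U := by
        rw [hUdef]; simp
      have hTU : ∀ {t : Fin n}, t ∈ T → t ∉ U := by
        intro t ht hU
        rw [hUdef, Finset.mem_compl] at hU
        exact hU (Finset.mem_insert_of_mem ht)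
      have hfinj : Function.Injective f := by
        intro a b hab
        rcases lt_trichotomy a c with ha | ha | ha <;> rcases lt_trichotomy b c with hb | hb | hb
        · -- both left
          rw [hfdef] at hab
          simp only [dif_pos ha, dif_pos hb] at hab
          have hinj := (T.orderEmbOfFin hTcard).injective hab
          have h2 : (c:ℕ) - 1 - (a:ℕ) = (c:ℕ) - 1 - (b:ℕ) := congrArg Fin.val hinj
          have ha' := Fin.lt_def.mp ha
          have hb' := Fin.lt_def.mp hb
          exact Fin.ext (by omega)
        · exfalso; rw [hb] at hab
          rw [hfc] at hab
          have := hfT a ha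
          rw [hab] at this
          exact h0T this
        · exfalso
          have h1 := hfT a ha
          have h2 := hfU b hb
          rw [hab] at h1
          exact hTU h1 h2
        · exfalso; rw [ha] at hab
          rw [hfc] at hab
          have := hfT b hb
          rw [← hab] at this
          exact h0T this
        · rw [ha, hb]
        · exfalso; rw [ha] at hab
          rw [hfc] at hab
          have := hfU b hb
          rw [← hab] at this
          exact hU0 this
        · exfalso
          have h1 := hfU a ha
          have h2 := hfT b hb
          exact hTU h2 (hab ▸ h1)
        · exfalso; rw [hb] at hab
          rw [hfc] at hab
          have := hfU a ha
          rw [hab] at this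
          exact hU0 this
        · -- both right
          rw [hfdef] at hab
          simp only [dif_neg (not_lt.2 (le_of_lt ha)), dif_pos ha,
            dif_neg (not_lt.2 (le_of_lt hb)), dif_pos hb] at hab
          have hinj := (U.orderEmbOfFin hUcard).injective hab
          have h2 : (a:ℕ) - (c:ℕ) - 1 = (b:ℕ) - (c:ℕ) - 1 := congrArg Fin.val hinj
          have ha' := Fin.lt_def.mp ha
          have hb' := Fin.lt_def.mp hb
          exact Fin.ext (by omega)
      set q : Fin n ≃ Fin n := Equiv.ofBijective f
        ((Finite.injective_iff_bijective).mp hfinj) with hqdef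
      have hqf : ∀ x, q x = f x := fun x => rfl
      have hqGood : Good c q := by
        intro a b hab
        constructor
        · intro hbc
          rcases eq_or_lt_of_le hbc with rfl | hbc'
          · rw [hqf, hqf, hfc]
            have hmem := hfT a hab
            have hne : f a ≠ ⟨0, hn0⟩ := fun h => h0T (h ▸ hmem)
            have h1 : (f a : ℕ) ≠ 0 := fun h => hne (Fin.ext h)
            show (⟨0, hn0⟩ : Fin n) < f a
            rw [Fin.lt_def]
            exact Nat.pos_of_ne_zero h1
          · rw [hqf, hqf, hfdef]
            simp only [dif_pos (lt_trans hab hbc'), dif_pos hbc']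
            apply (T.orderEmbOfFin hTcard).strictMono
            rw [Fin.lt_def]
            have h1 := Fin.lt_def.mp hab
            have h2 := Fin.lt_def.mp hbc'
            simp; omega
        · intro hca
          rcases eq_or_lt_of_le hca with rfl | hca'
          · rw [hqf, hqf, hfc]
            have hmem := hfU b hab
            have hne : f b ≠ ⟨0, hn0⟩ := fun h => hU0 (h ▸ hmem)
            have h1 : (f b : ℕ) ≠ 0 := fun h => hne (Fin.ext h)
            show (⟨0, hn0⟩ : Fin n) < f b
            rw [Fin.lt_def]
            exact Nat.pos_of_ne_zero h1
          · rw [hqf, hqf, hfdef]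
            simp only [dif_neg (not_lt.2 (le_of_lt hca')),
              dif_pos hca', dif_neg (not_lt.2 (le_of_lt (lt_trans hca' hab))),
              dif_pos (lt_trans hca' hab)]
            apply (U.orderEmbOfFin hUcard).strictMono
            rw [Fin.lt_def]
            have h1 := Fin.lt_def.mp hab
            have h2 := Fin.lt_def.mp hca'
            simp; omega
      refine ⟨⟨q, hqGood⟩, ?_⟩
      apply Subtype.ext
      simp only
      apply Finset.eq_of_subset_of_card_le
      · intro t ht
        simp only [Finset.mem_image, Finset.mem_Iio] at ht
        obtain ⟨a, hac, rfl⟩ := ht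
        rw [hqf]
        exact hfT a hac
      · rw [Finset.card_image_of_injective _ q.injective, Fin.card_Iio, hTcard]
  rw [key]
  have : Nat.card {T // T ∈ S} = S.card := by
    rw [Nat.card_eq_fintype_card, Fintype.card_coe]
  rw [this, hS, Finset.card_powersetCard, Finset.card_erase_of_mem (Finset.mem_univ _),
    Finset.card_univ, Fintype.card_fin]

end CountGood

section Equivalence

variable {n : ℕ}

lemma cond_iff (P : Fin n → Fin n ≃ Fin n) :
    (Narcissistic P ∧
      SinglePeakedWrt P (· < ·) ∧
      (∀ v a b : Fin n, (v : ℕ) = 0 → a < b → prefers (P v) a b) ∧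
      (∀ v a b : Fin n, (v : ℕ) = n - 1 → a < b → prefers (P v) b a)) ↔
    ∀ v, Good v (P v) := by
  constructor
  · rintro ⟨hN, hSP, -, -⟩ v a b hab
    have hpeak : ∀ x, x ≠ v → prefers (P v) v x := fun x hx => hN v x hx
    constructor
    · intro hbv
      rcases eq_or_lt_of_le hbv with rfl | hbv'
      · exact hN b a (ne_of_lt hab)
      · exact hSP v v a b hpeak (Or.inl ⟨hab, hbv'⟩)
    · intro hva
      rcases eq_or_lt_of_le hva with rfl | hva'
      · exact hN v b (ne_of_gt hab)
      · exact hSP v v b a hpeak (Or.inr ⟨hva', hab⟩)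
  · intro hG
    refine ⟨?_, ?_, ?_, ?_⟩
    · intro i a ha
      exact (hG i).peak a ha
    · intro i c a b hpk hpat
      have hc : c = i := by
        by_contra hne
        have h1 : prefers (P i) i c := (hG i).peak c hne
        have h2 : prefers (P i) c i := hpk i (fun h => hne h.symm)
        exact absurd (lt_trans h1 h2) (lt_irrefl _)
      subst hc
      rcases hpat with ⟨hab, hbc⟩ | ⟨hcb, hba⟩
      · exact (hG c a b hab).1 (le_of_lt hbc)
      · exact (hG c b a hba).2 (le_of_lt hcb)
    · intro v a b hv hab
      apply (hG v a b hab).2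
      rw [Fin.le_def, hv]
      exact Nat.zero_le _
    · intro v a b hv hab
      apply (hG v a b hab).1
      rw [Fin.le_def, hv]
      exact Nat.le_sub_one_of_lt b.isLt

end Equivalence

/-- The number of single-peaked narcissistic profiles on `n ≥ 2` voters in normalized
form (narcissistic, single-peaked with respect to the natural order `0 < 1 < ⋯ < n-1`,
the first voter's order being `0 ≻ 1 ≻ ⋯ ≻ n-1` and the last voter's order the reverse)
equals `∏_{i=2}^{n-1} C(n-1, i-1)`. -/
theorem spn_count (n : ℕ) (hn : 2 ≤ n) :
    Nat.card {P : Fin n → Fin n ≃ Fin n //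
      Narcissistic P ∧
      SinglePeakedWrt P (· < ·) ∧
      (∀ v a b : Fin n, (v : ℕ) = 0 → a < b → prefers (P v) a b) ∧
      (∀ v a b : Fin n, (v : ℕ) = n - 1 → a < b → prefers (P v) b a)} =
      ∏ i ∈ Finset.Icc 2 (n - 1), (n - 1).choose (i - 1) := by
  classical
  have step1 : Nat.card {P : Fin n → Fin n ≃ Fin n //
      Narcissistic P ∧
      SinglePeakedWrt P (· < ·) ∧
      (∀ v a b : Fin n, (v : ℕ) = 0 → a < b → prefers (P v) a b) ∧
      (∀ v a b : Fin n, (v : ℕ) = n - 1 → a < b → prefers (P v) b a)} =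
      ∏ v : Fin n, (n - 1).choose (v : ℕ) := by
    calc Nat.card {P : Fin n → Fin n ≃ Fin n //
          Narcissistic P ∧
          SinglePeakedWrt P (· < ·) ∧
          (∀ v a b : Fin n, (v : ℕ) = 0 → a < b → prefers (P v) a b) ∧
          (∀ v a b : Fin n, (v : ℕ) = n - 1 → a < b → prefers (P v) b a)}
        = Nat.card {P : Fin n → Fin n ≃ Fin n // ∀ v, Good v (P v)} :=
          Nat.card_congr (Equiv.subtypeEquivRight (fun P => cond_iff P))
      _ = Nat.card (∀ v : Fin n, {q : Fin n ≃ Fin n // Good v q}) :=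
          Nat.card_congr (Equiv.subtypePiEquivPi (p := fun (v : Fin n) (q : Fin n ≃ Fin n) => Good v q))
      _ = ∏ v : Fin n, Nat.card {q : Fin n ≃ Fin n // Good v q} := Nat.card_pi
      _ = ∏ v : Fin n, (n - 1).choose (v : ℕ) :=
          Finset.prod_congr rfl (fun v _ => card_good v)
  rw [step1, Fin.prod_univ_eq_prod_range (fun k => (n - 1).choose k) n]
  clear step1
  -- arithmetic
  obtain ⟨m, rfl⟩ : ∃ m, n = m + 1 := ⟨n - 1, by omega⟩
  have hm : 1 ≤ m := by omega
  simp only [Nat.add_sub_cancel]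
  rw [Finset.prod_range_succ, Nat.choose_self, mul_one]
  rw [Finset.range_eq_Ico, Finset.prod_eq_prod_Ico_succ_bot hm, Nat.choose_zero_right, one_mul]
  rw [show Finset.Icc 2 m = Finset.Ico 2 (m + 1) from (Finset.Ico_add_one_right_eq_Icc 2 m).symm]
  rw [Finset.prod_Ico_eq_prod_range, Finset.prod_Ico_eq_prod_range,
    show m + 1 - 2 = m - 1 by omega]
  apply Finset.prod_congr rfl
  intro i _
  congr 1
  omega
end

section
/- Every single-crossing narcissistic preference profile is single-peaked. -/
/-- Every single-crossing narcissistic preference profile is single-peaked. -/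
theorem scn_implies_sp (n : ℕ) (P : Fin n → Fin n ≃ Fin n)
    (hnar : Narcissistic P)
    (hsc : ∃ σ : Fin n ≃ Fin n, SingleCrossingWrt P (fun i j => σ i < σ j)) :
    ∃ τ : Fin n ≃ Fin n, SinglePeakedWrt P (fun a b => τ a < τ b) := by
  obtain ⟨σ, hsc⟩ := hsc
  refine ⟨σ, ?_⟩
  intro i c a b hpeak hor
  -- the peak is the voter herself
  have hci : c = i := by
    by_contra h
    exact lt_asymm (hnar i c h) (hpeak i (Ne.symm h))
  subst hci
  have hab : a ≠ b := by
    rintro rfl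
    rcases hor with ⟨h1, _⟩ | ⟨_, h2⟩ <;> exact lt_irrefl _ ‹_›
  by_contra hcon
  -- voter c prefers a to b
  have hca : prefers (P c) a b := by
    have : (P c) a ≠ (P c) b := fun h => hab ((P c).injective h)
    unfold prefers at hcon ⊢
    omega
  have hba : prefers (P b) b a := hnar b a hab
  rcases hor with ⟨h1, h2⟩ | ⟨h1, h2⟩
  · -- σ a < σ b < σ c ; voters a and c prefer a to b, so b does too
    exact lt_asymm hba (hsc a b a b c h1 h2 (hnar a b (Ne.symm hab)) hca)
  · -- σ c < σ b < σ a
    exact lt_asymm hba (hsc a b c b a h1 h2 hca (hnar a b (Ne.symm hab)))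
end

section
/- If a preference profile contains a worst-subprofile, i.e., three alternatives a, b, c and three voters i, j, k such that voter i prefers both b and c to a, voter j prefers both a and c to b, and voter k prefers both a and b to c, then the profile is not single-peaked. -/
/-- A profile containing a worst-subprofile (three distinct alternatives `a, b, c` and
voters `i, j, k` such that `i` ranks `a` below `b` and `c`, `j` ranks `b` below `a` and
`c`, and `k` ranks `c` below `a` and `b`) is not single-peaked. -/
theorem worst_subprofile_not_sp (m n : ℕ) (P : Fin m → Fin n ≃ Fin n)
    (a b c : Fin n) (i j k : Fin m)
    (hab : a ≠ b) (hac : a ≠ c) (hbc : b ≠ c)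
    (hi : prefers (P i) b a ∧ prefers (P i) c a)
    (hj : prefers (P j) a b ∧ prefers (P j) c b)
    (hk : prefers (P k) a c ∧ prefers (P k) b c) :
    ¬ ∃ σ : Fin n ≃ Fin n, SinglePeakedWrt P (fun x y => σ x < σ y) := by
  rintro ⟨σ, hsp⟩
  haveI : NeZero n := ⟨a.pos.ne'⟩
  have hpeak : ∀ v : Fin m, ∀ x, x ≠ (P v).symm 0 → prefers (P v) ((P v).symm 0) x := by
    intro v x hx
    have h0 : (P v) ((P v).symm 0) = 0 := (P v).apply_symm_apply 0
    have hne : (P v) x ≠ 0 := fun h => hx ((P v).injective (h.trans h0.symm))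
    unfold prefers
    rw [h0]
    rw [Fin.lt_def, Fin.val_zero]
    exact Nat.pos_of_ne_zero (fun hh => hne (Fin.ext (by simp [hh])))
  have key : ∀ (v : Fin m) (x y z : Fin n), prefers (P v) x z → prefers (P v) y z →
      σ x < σ z → σ z < σ y → False := by
    intro v x y z hxz hyz h1 h2
    simp only [prefers] at hxz hyz
    rcases lt_trichotomy (σ ((P v).symm 0)) (σ z) with h | h | h
    · have := hsp v ((P v).symm 0) y z (hpeak v) (Or.inr ⟨h, h2⟩)
      simp only [prefers] at this
      exact absurd this (asymm hyz)
    · have hpz : (P v).symm 0 = z := σ.injective h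
      have hxp : x ≠ (P v).symm 0 := by
        rw [hpz]; intro hh; rw [hh] at hxz; exact absurd hxz (lt_irrefl _)
      have := hpeak v x hxp
      rw [hpz] at this
      simp only [prefers] at this
      exact absurd this (asymm hxz)
    · have := hsp v ((P v).symm 0) x z (hpeak v) (Or.inl ⟨h1, h⟩)
      simp only [prefers] at this
      exact absurd this (asymm hxz)
  have sab : σ a ≠ σ b := fun h => hab (σ.injective h)
  have sac : σ a ≠ σ c := fun h => hac (σ.injective h)
  have sbc : σ b ≠ σ c := fun h => hbc (σ.injective h)
  rcases lt_trichotomy (σ a) (σ b) with h1 | h1 | h1 <;>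
  rcases lt_trichotomy (σ b) (σ c) with h2 | h2 | h2 <;>
  rcases lt_trichotomy (σ a) (σ c) with h3 | h3 | h3 <;>
  first
    | exact absurd h1 sab
    | exact absurd h2 sbc
    | exact absurd h3 sac
    | exact key j a c b hj.1 hj.2 h1 h2
    | exact key k a b c hk.1 hk.2 h3 h2
    | exact key i c b a hi.2 hi.1 h3 h1
    | exact key i b c a hi.1 hi.2 h1 h3
    | exact key k b a c hk.2 hk.1 h2 h3
    | exact key j c a b hj.2 hj.1 h2 h1
end

section
/- If a preference profile contains an α-subprofile, i.e., four alternatives a, b, c, d and two voters i, j such that voter i's order satisfies a ≻_i c, b ≻_i c, c ≻_i d, and voter j's order satisfies b ≻_j c, d ≻_j c, c ≻_j a, then the profile is not single-peaked. -/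
set_option maxHeartbeats 1000000


lemma alpha_aux (A B C D Qi Qj ia ic idd ja jc jd : ℕ)
    (v1 : ia < ic) (v3 : ic < idd) (w2 : jd < jc) (w3 : jc < ja)
    (sAC : A ≠ C) (sBC : B ≠ C) (sCD : C ≠ D) (sAD : A ≠ D)
    (sCQi : C ≠ Qi) (sDQi : D ≠ Qi) (sCQj : C ≠ Qj) (sAQj : A ≠ Qj)
    (ni1 : ¬((A < C ∧ C < Qi) ∨ (Qi < C ∧ C < A)))
    (ni2 : ¬((B < C ∧ C < Qi) ∨ (Qi < C ∧ C < B)))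
    (ni3 : ¬((C < D ∧ D < Qi) ∨ (Qi < D ∧ D < C)))
    (nj1 : ¬((B < C ∧ C < Qj) ∨ (Qj < C ∧ C < B)))
    (nj2 : ¬((D < C ∧ C < Qj) ∨ (Qj < C ∧ C < D)))
    (nj3 : ¬((C < A ∧ A < Qj) ∨ (Qj < A ∧ A < C)))
    (kad : ((A < D ∧ D < Qi) ∨ (Qi < D ∧ D < A)) → idd < ia)
    (kda : ((D < A ∧ A < Qj) ∨ (Qj < A ∧ A < D)) → ja < jd) : False := by
  rcases Nat.lt_trichotomy C Qi with hCQi | hCQi | hCQi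
  · -- C < Qi
    have hAC : C < A := by
      rcases Nat.lt_trichotomy A C with h | h | h
      · exact absurd (Or.inl ⟨h, hCQi⟩) ni1
      · exact absurd h sAC
      · exact h
    have hBC : C < B := by
      rcases Nat.lt_trichotomy B C with h | h | h
      · exact absurd (Or.inl ⟨h, hCQi⟩) ni2
      · exact absurd h sBC
      · exact h
    rcases Nat.lt_trichotomy C Qj with hCQj | hCQj | hCQj
    · have hDC : C < D := by
        rcases Nat.lt_trichotomy D C with h | h | h
        · exact absurd (Or.inl ⟨h, hCQj⟩) nj2
        · exact absurd h.symm sCD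
        · exact h
      have hDQi : Qi < D := by
        rcases Nat.lt_trichotomy D Qi with h | h | h
        · exact absurd (Or.inl ⟨hDC, h⟩) ni3
        · exact absurd h sDQi
        · exact h
      have hAQj : Qj < A := by
        rcases Nat.lt_trichotomy A Qj with h | h | h
        · exact absurd (Or.inl ⟨hAC, h⟩) nj3
        · exact absurd h sAQj
        · exact h
      rcases Nat.lt_trichotomy A D with h | h | h
      · have := kda (Or.inr ⟨hAQj, h⟩)
        exact Nat.lt_irrefl _ (this.trans (w2.trans w3))
      · exact absurd h sAD
      · have := kad (Or.inr ⟨hDQi, h⟩)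
        exact Nat.lt_irrefl _ (this.trans (v1.trans v3))
    · exact absurd hCQj sCQj
    · exact nj1 (Or.inr ⟨hCQj, hBC⟩)
  · exact absurd hCQi sCQi
  · -- Qi < C
    have hAC : A < C := by
      rcases Nat.lt_trichotomy A C with h | h | h
      · exact h
      · exact absurd h sAC
      · exact absurd (Or.inr ⟨hCQi, h⟩) ni1
    have hBC : B < C := by
      rcases Nat.lt_trichotomy B C with h | h | h
      · exact h
      · exact absurd h sBC
      · exact absurd (Or.inr ⟨hCQi, h⟩) ni2
    rcases Nat.lt_trichotomy C Qj with hCQj | hCQj | hCQj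
    · exact nj1 (Or.inl ⟨hBC, hCQj⟩)
    · exact absurd hCQj sCQj
    · have hDC : D < C := by
        rcases Nat.lt_trichotomy D C with h | h | h
        · exact h
        · exact absurd h.symm sCD
        · exact absurd (Or.inr ⟨hCQj, h⟩) nj2
      have hDQi : D < Qi := by
        rcases Nat.lt_trichotomy D Qi with h | h | h
        · exact h
        · exact absurd h sDQi
        · exact absurd (Or.inr ⟨h, hDC⟩) ni3
      have hAQj : A < Qj := by
        rcases Nat.lt_trichotomy A Qj with h | h | h
        · exact h
        · exact absurd h sAQj
        · exact absurd (Or.inr ⟨h, hAC⟩) nj3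
      rcases Nat.lt_trichotomy A D with h | h | h
      · have := kad (Or.inl ⟨h, hDQi⟩)
        exact Nat.lt_irrefl _ (this.trans (v1.trans v3))
      · exact absurd h sAD
      · have := kda (Or.inl ⟨h, hAQj⟩)
        exact Nat.lt_irrefl _ (this.trans (w2.trans w3))

/-- A profile containing an `α`-subprofile (four distinct alternatives `a, b, c, d` and
two voters `i, j` with `a ≻ᵢ c`, `b ≻ᵢ c`, `c ≻ᵢ d` and `b ≻ⱼ c`, `d ≻ⱼ c`, `c ≻ⱼ a`)
is not single-peaked. -/
theorem alpha_subprofile_not_sp (m n : ℕ) (P : Fin m → Fin n ≃ Fin n)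
    (a b c d : Fin n) (i j : Fin m)
    (hab : a ≠ b) (hac : a ≠ c) (had : a ≠ d)
    (hbc : b ≠ c) (hbd : b ≠ d) (hcd : c ≠ d)
    (hi : prefers (P i) a c ∧ prefers (P i) b c ∧ prefers (P i) c d)
    (hj : prefers (P j) b c ∧ prefers (P j) d c ∧ prefers (P j) c a) :
    ¬ ∃ σ : Fin n ≃ Fin n, SinglePeakedWrt P (fun x y => σ x < σ y) := by
  rintro ⟨σ, hsp⟩
  obtain ⟨hiac, hibc, hicd⟩ := hi
  obtain ⟨hjbc, hjdc, hjca⟩ := hj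
  have hn : 0 < n := a.pos
  set z : Fin n := ⟨0, hn⟩ with hzdef
  set pi : Fin n := (P i).symm z with hpidef
  set pj : Fin n := (P j).symm z with hpjdef
  have epi : (P i) pi = z := Equiv.apply_symm_apply _ _
  have epj : (P j) pj = z := Equiv.apply_symm_apply _ _
  have hpi : ∀ x, x ≠ pi → prefers (P i) pi x := by
    intro x hx
    have hne : (P i) x ≠ z := by
      intro h
      exact hx ((P i).injective (h.trans epi.symm))
    have hv : ((P i) x).val ≠ 0 := by
      intro h
      exact hne (Fin.val_injective (h.trans rfl))
    show (P i) pi < (P i) x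
    rw [epi, Fin.lt_def]
    exact Nat.pos_of_ne_zero hv
  have hpj : ∀ x, x ≠ pj → prefers (P j) pj x := by
    intro x hx
    have hne : (P j) x ≠ z := by
      intro h
      exact hx ((P j).injective (h.trans epj.symm))
    have hv : ((P j) x).val ≠ 0 := by
      intro h
      exact hne (Fin.val_injective (h.trans rfl))
    show (P j) pj < (P j) x
    rw [epj, Fin.lt_def]
    exact Nat.pos_of_ne_zero hv
  have keyi : ∀ (x y : Fin n),
      ((σ x).val < (σ y).val ∧ (σ y).val < (σ pi).val) ∨
      ((σ pi).val < (σ y).val ∧ (σ y).val < (σ x).val) →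
      ((P i) y).val < ((P i) x).val := by
    intro x y h
    have := hsp i pi x y hpi (by
      rcases h with ⟨h1, h2⟩ | ⟨h1, h2⟩
      · exact Or.inl ⟨Fin.lt_def.mpr h1, Fin.lt_def.mpr h2⟩
      · exact Or.inr ⟨Fin.lt_def.mpr h1, Fin.lt_def.mpr h2⟩)
    exact Fin.lt_def.mp this
  have keyj : ∀ (x y : Fin n),
      ((σ x).val < (σ y).val ∧ (σ y).val < (σ pj).val) ∨
      ((σ pj).val < (σ y).val ∧ (σ y).val < (σ x).val) →
      ((P j) y).val < ((P j) x).val := by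
    intro x y h
    have := hsp j pj x y hpj (by
      rcases h with ⟨h1, h2⟩ | ⟨h1, h2⟩
      · exact Or.inl ⟨Fin.lt_def.mpr h1, Fin.lt_def.mpr h2⟩
      · exact Or.inr ⟨Fin.lt_def.mpr h1, Fin.lt_def.mpr h2⟩)
    exact Fin.lt_def.mp this
  -- preferences in ℕ form
  have v1 : ((P i) a).val < ((P i) c).val := Fin.lt_def.mp hiac
  have v2 : ((P i) b).val < ((P i) c).val := Fin.lt_def.mp hibc
  have v3 : ((P i) c).val < ((P i) d).val := Fin.lt_def.mp hicd
  have w1 : ((P j) b).val < ((P j) c).val := Fin.lt_def.mp hjbc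
  have w2 : ((P j) d).val < ((P j) c).val := Fin.lt_def.mp hjdc
  have w3 : ((P j) c).val < ((P j) a).val := Fin.lt_def.mp hjca
  -- the peak positions
  have epiv : ((P i) pi).val = 0 := by rw [epi]
  have epjv : ((P j) pj).val = 0 := by rw [epj]
  -- c, d differ from pi; a, c differ from pj
  have hcpi : c ≠ pi := by intro h; rw [h, epiv] at v1; omega
  have hdpi : d ≠ pi := by intro h; rw [h, epiv] at v3; omega
  have hcpj : c ≠ pj := by intro h; rw [h, epjv] at w1; omega
  have hapj : a ≠ pj := by intro h; rw [h, epjv] at w3; omega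
  -- σ-distinctness facts in ℕ form
  have sdist : ∀ x y : Fin n, x ≠ y → (σ x).val ≠ (σ y).val := by
    intro x y hxy h
    exact hxy (σ.injective (Fin.val_injective h))
  have s1 := sdist a b hab
  have s2 := sdist a c hac
  have s3 := sdist a d had
  have s4 := sdist b c hbc
  have s5 := sdist b d hbd
  have s6 := sdist c d hcd
  have s7 := sdist c pi hcpi
  have s8 := sdist d pi hdpi
  have s9 := sdist c pj hcpj
  have s10 := sdist a pj hapj
  -- negation facts: certain alternatives are not "between" others and the peak
  have ni1 : ¬(((σ a).val < (σ c).val ∧ (σ c).val < (σ pi).val) ∨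
      ((σ pi).val < (σ c).val ∧ (σ c).val < (σ a).val)) := by
    intro h
    exact Nat.lt_irrefl _ ((keyi a c h).trans v1)
  have ni2 : ¬(((σ b).val < (σ c).val ∧ (σ c).val < (σ pi).val) ∨
      ((σ pi).val < (σ c).val ∧ (σ c).val < (σ b).val)) := by
    intro h
    exact Nat.lt_irrefl _ ((keyi b c h).trans v2)
  have ni3 : ¬(((σ c).val < (σ d).val ∧ (σ d).val < (σ pi).val) ∨
      ((σ pi).val < (σ d).val ∧ (σ d).val < (σ c).val)) := by
    intro h
    exact Nat.lt_irrefl _ ((keyi c d h).trans v3)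
  have nj1 : ¬(((σ b).val < (σ c).val ∧ (σ c).val < (σ pj).val) ∨
      ((σ pj).val < (σ c).val ∧ (σ c).val < (σ b).val)) := by
    intro h
    exact Nat.lt_irrefl _ ((keyj b c h).trans w1)
  have nj2 : ¬(((σ d).val < (σ c).val ∧ (σ c).val < (σ pj).val) ∨
      ((σ pj).val < (σ c).val ∧ (σ c).val < (σ d).val)) := by
    intro h
    exact Nat.lt_irrefl _ ((keyj d c h).trans w2)
  have nj3 : ¬(((σ c).val < (σ a).val ∧ (σ a).val < (σ pj).val) ∨
      ((σ pj).val < (σ a).val ∧ (σ a).val < (σ c).val)) := by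
    intro h
    exact Nat.lt_irrefl _ ((keyj c a h).trans w3)
  exact alpha_aux (σ a).val (σ b).val (σ c).val (σ d).val (σ pi).val (σ pj).val
    ((P i) a).val ((P i) c).val ((P i) d).val ((P j) a).val ((P j) c).val ((P j) d).val
    v1 v3 w2 w3 s2 s4 s6 s3 s7 s8 s9 s10 ni1 ni2 ni3 nj1 nj2 nj3 (keyi a d) (keyj d a)
end

section
/- If a preference profile contains a γ-subprofile, i.e., three pairs of alternatives {a,b}, {c,d}, {e,f} and three voters i, j, k with: a ≻_i b, c ≻_i d, e ≻_i f; b ≻_j a, d ≻_j c, e ≻_j f; a ≻_k b, d ≻_k c, f ≻_k e, then the profile is not single-crossing. -/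
/-- A profile containing a `γ`-subprofile (three pairs of alternatives `{a,b}`, `{c,d}`,
`{e,f}` and three voters `i, j, k` with `a ≻ᵢ b`, `c ≻ᵢ d`, `e ≻ᵢ f`; `b ≻ⱼ a`,
`d ≻ⱼ c`, `e ≻ⱼ f`; `a ≻ₖ b`, `d ≻ₖ c`, `f ≻ₖ e`) is not single-crossing. -/
theorem gamma_subprofile_not_sc (m n : ℕ) (P : Fin m → Fin n ≃ Fin n)
    (a b c d e f : Fin n) (i j k : Fin m)
    (hab : a ≠ b) (hcd : c ≠ d) (hef : e ≠ f)
    (hi : prefers (P i) a b ∧ prefers (P i) c d ∧ prefers (P i) e f)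
    (hj : prefers (P j) b a ∧ prefers (P j) d c ∧ prefers (P j) e f)
    (hk : prefers (P k) a b ∧ prefers (P k) d c ∧ prefers (P k) f e) :
    ¬ ∃ σ : Fin m ≃ Fin m, SingleCrossingWrt P (fun x y => σ x < σ y) := by
  rintro ⟨σ, h⟩
  obtain ⟨hiab, hicd, hief⟩ := hi
  obtain ⟨hjba, hjdc, hjef⟩ := hj
  obtain ⟨hkab, hkdc, hkfe⟩ := hk
  have hij : i ≠ j := fun hh => absurd (hh ▸ hjba) (lt_asymm hiab)
  have hik : i ≠ k := fun hh => absurd (hh ▸ hkfe) (lt_asymm hief)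
  have hjk : j ≠ k := fun hh => absurd (hh ▸ hkab) (lt_asymm hjba)
  rcases lt_trichotomy (σ i) (σ j) with h1 | h1 | h1
  · rcases lt_trichotomy (σ j) (σ k) with h2 | h2 | h2
    · exact absurd (h a b i j k h1 h2 hiab hkab) (lt_asymm hjba)
    · exact hjk (σ.injective (Fin.ext (le_antisymm h2.le h2.ge)))
    · rcases lt_trichotomy (σ i) (σ k) with h3 | h3 | h3
      · exact absurd (h e f i k j h3 h2 hief hjef) (lt_asymm hkfe)
      · exact hik (σ.injective (Fin.ext (le_antisymm h3.le h3.ge)))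
      · exact absurd (h d c k i j h3 h1 hkdc hjdc) (lt_asymm hicd)
  · exact hij (σ.injective (Fin.ext (le_antisymm h1.le h1.ge)))
  · rcases lt_trichotomy (σ j) (σ k) with h2 | h2 | h2
    · rcases lt_trichotomy (σ i) (σ k) with h3 | h3 | h3
      · exact absurd (h d c j i k h1 h3 hjdc hkdc) (lt_asymm hicd)
      · exact hik (σ.injective (Fin.ext (le_antisymm h3.le h3.ge)))
      · exact absurd (h e f j k i h2 h3 hjef hief) (lt_asymm hkfe)
    · exact hjk (σ.injective (Fin.ext (le_antisymm h2.le h2.ge)))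
    · exact absurd (h a b k j i h2 h1 hkab hiab) (lt_asymm hjba)
end

section
/- If a preference profile contains a δ-subprofile, i.e., two pairs of alternatives {a,b}, {c,d} and four voters i, j, k, ℓ with: a ≻_i b and c ≻_i d; b ≻_j a and c ≻_j d; a ≻_k b and d ≻_k c; b ≻_ℓ a and d ≻_ℓ c, then the profile is not single-crossing. -/
theorem arith (p q r s : ℕ)
 (d1 : p ≠ q) (d3 : p ≠ s) (d4 : q ≠ r) (d2 : p ≠ r) (d5 : q ≠ s)
 (h1 : ¬(p < q ∧ q < r)) (h2 : ¬(r < q ∧ q < p))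
 (h5 : ¬(q < p ∧ p < s)) (h6 : ¬(s < p ∧ p < q))
 (h9 : ¬(p < r ∧ r < q)) (h10 : ¬(q < r ∧ r < p))
 (h11 : ¬(p < s ∧ s < q)) (h12 : ¬(q < s ∧ s < p))
 (h15 : ¬(r < q ∧ q < s)) (h16 : ¬(s < q ∧ q < r)) : False := by
  rcases d2.lt_or_gt with hpr | hrp
  · have hqr : q < r := d4.lt_or_gt.resolve_right (fun h => h9 ⟨hpr, h⟩)
    rcases d5.lt_or_gt with hqs | hsq
    · have hps : p < s := d3.lt_or_gt.resolve_right (fun h => h12 ⟨hqs, h⟩)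
      have hqp : q < p := d1.lt_or_gt.resolve_left (fun h => h1 ⟨h, hqr⟩)
      exact h5 ⟨hqp, hps⟩
    · exact h16 ⟨hsq, hqr⟩
  · have hrq : r < q := d4.lt_or_gt.resolve_left (fun h => h10 ⟨h, hrp⟩)
    rcases d5.lt_or_gt with hqs | hsq
    · exact h15 ⟨hrq, hqs⟩
    · have hsp : s < p := d3.lt_or_gt.resolve_left (fun h => h11 ⟨h, hsq⟩)
      have hpq : p < q := d1.lt_or_gt.resolve_right (fun h => h2 ⟨hrq, h⟩)
      exact h6 ⟨hsp, hpq⟩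

/-- A profile containing a `δ`-subprofile (two pairs of alternatives `{a,b}`, `{c,d}`
and four voters `i, j, k, ℓ` with `a ≻ᵢ b`, `c ≻ᵢ d`; `b ≻ⱼ a`, `c ≻ⱼ d`; `a ≻ₖ b`,
`d ≻ₖ c`; `b ≻ₗ a`, `d ≻ₗ c`) is not single-crossing. -/
theorem delta_subprofile_not_sc (m n : ℕ) (P : Fin m → Fin n ≃ Fin n)
    (a b c d : Fin n) (i j k l : Fin m)
    (hab : a ≠ b) (hcd : c ≠ d)
    (hi : prefers (P i) a b ∧ prefers (P i) c d)
    (hj : prefers (P j) b a ∧ prefers (P j) c d)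
    (hk : prefers (P k) a b ∧ prefers (P k) d c)
    (hl : prefers (P l) b a ∧ prefers (P l) d c) :
    ¬ ∃ σ : Fin m ≃ Fin m, SingleCrossingWrt P (fun x y => σ x < σ y) := by
  rintro ⟨σ, hsc⟩
  -- asymmetry of preferences
  have A : ∀ (x : Fin m) (p q : Fin n), prefers (P x) p q → ¬ prefers (P x) q p :=
    fun x p q h h' => absurd h' (not_lt_of_gt h)
  -- helper: forbidden middles, stated over ℕ
  have H : ∀ (u v w : Fin m) (p q : Fin n), prefers (P u) p q → prefers (P w) p q →
      ¬ prefers (P v) p q → ¬(((σ u : ℕ) < σ v) ∧ ((σ v : ℕ) < σ w)) := by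
    intro u v w p q hu hw hv hlt
    exact hv (hsc p q u v w (Fin.lt_def.mpr hlt.1) (Fin.lt_def.mpr hlt.2) hu hw)
  -- distinctness of σ-values
  have D : ∀ (u v : Fin m) (p q : Fin n), prefers (P u) p q → prefers (P v) q p →
      (σ u : ℕ) ≠ (σ v : ℕ) := by
    intro u v p q hu hv h
    have : u = v := σ.injective (Fin.ext h)
    subst this
    exact A u p q hu hv
  have d1 := D i j a b hi.1 hj.1
  have d2 := D i k c d hi.2 hk.2
  have d3 := D i l a b hi.1 hl.1
  have d4 := D j k c d hj.2 hk.2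
  have d5 := D j l c d hj.2 hl.2
  have d6 := D k l a b hk.1 hl.1
  -- pair (a,b): i,k prefer a≻b; j,l prefer b≻a
  have h1 := H i j k a b hi.1 hk.1 (A j b a hj.1)
  have h2 := H k j i a b hk.1 hi.1 (A j b a hj.1)
  have h3 := H i l k a b hi.1 hk.1 (A l b a hl.1)
  have h4 := H k l i a b hk.1 hi.1 (A l b a hl.1)
  have h5 := H j i l b a hj.1 hl.1 (A i a b hi.1)
  have h6 := H l i j b a hl.1 hj.1 (A i a b hi.1)
  have h7 := H j k l b a hj.1 hl.1 (A k a b hk.1)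
  have h8 := H l k j b a hl.1 hj.1 (A k a b hk.1)
  -- pair (c,d): i,j prefer c≻d; k,l prefer d≻c
  have h9 := H i k j c d hi.2 hj.2 (A k d c hk.2)
  have h10 := H j k i c d hj.2 hi.2 (A k d c hk.2)
  have h11 := H i l j c d hi.2 hj.2 (A l d c hl.2)
  have h12 := H j l i c d hj.2 hi.2 (A l d c hl.2)
  have h13 := H k i l d c hk.2 hl.2 (A i c d hi.2)
  have h14 := H l i k d c hl.2 hk.2 (A i c d hi.2)
  have h15 := H k j l d c hk.2 hl.2 (A j c d hj.2)
  have h16 := H l j k d c hl.2 hk.2 (A j c d hj.2)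
  exact arith (σ i) (σ j) (σ k) (σ l) d1 d3 d4 d2 d5 h1 h2 h5 h6 h9 h10 h11 h12 h15 h16
end

section
/- Let P be a narcissistic profile on {1,...,n} in which voter 1's order is 1 ≻ 2 ≻ ... ≻ n and voter n's order is the reverse, and which is single-crossing with respect to the voter order 1 ▷ 2 ▷ ... ▷ n. Then for each alternative a with 1 ≤ a ≤ n-1, the position of a in the preference orders of voters a+1, a+2, ..., n is non-decreasing (where the position of x in ≻ is one plus the number of alternatives strictly preferred to x). -/

lemma pos_card {n : ℕ} (p : Fin n ≃ Fin n) (a : Fin n) :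
    (Finset.univ.filter fun b => p b < p a).card = (p a : ℕ) := by
  have h : (Finset.univ.filter fun b => p b < p a)
      = (Finset.Iio (p a)).map p.symm.toEmbedding := by
    ext b
    simp [Equiv.symm_apply_eq, eq_comm]
  rw [h, Finset.card_map]
  simp

/-- Let `P` be a narcissistic profile on `{0, …, n-1}` in which the first voter's order
is `0 ≻ 1 ≻ ⋯ ≻ n-1`, the last voter's order is the reverse, and which is
single-crossing with respect to the natural voter order. Then for each alternative `a`
other than the last one, the position of `a` (one plus the number of alternatives
strictly preferred to `a`, here `(P v a : ℕ) + 1`) in the preference orders of the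
voters `a+1, a+2, …, n-1` is non-decreasing. -/
theorem scn_positions_nondecreasing (n : ℕ) (hn : 2 ≤ n)
    (P : Fin n → Fin n ≃ Fin n)
    (hnar : Narcissistic P)
    (h0 : ∀ v a b : Fin n, (v : ℕ) = 0 → a < b → prefers (P v) a b)
    (hlast : ∀ v a b : Fin n, (v : ℕ) = n - 1 → a < b → prefers (P v) b a)
    (hsc : SingleCrossingWrt P (· < ·)) :
    ∀ a v w : Fin n, (a : ℕ) < n - 1 → a < v → v ≤ w →
      ((P v) a : ℕ) + 1 ≤ ((P w) a : ℕ) + 1 := by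

  intro a v w ha hav hvw
  simp only [add_le_add_iff_right]
  have key : ∀ b : Fin n, P v b < P v a → P w b < P w a := by
    intro b hb
    rcases eq_or_lt_of_le hvw with rfl | hvw'
    · exact hb
    rcases lt_trichotomy a b with hab | rfl | hab
    · set L : Fin n := ⟨n - 1, by omega⟩ with hL
      have hLpref : prefers (P L) b a := hlast L a b (by simp [hL]) hab
      have hwL : w ≤ L := by
        rw [Fin.le_def]; have := w.isLt; simp [hL]; omega
      rcases lt_or_eq_of_le hwL with hwL' | hwL'
      · exact hsc b a v w L hvw' hwL' hb hLpref
      · rw [hwL']; exact hLpref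
    · exact absurd hb (lt_irrefl _)
    · by_contra hcon
      have hne : P w b ≠ P w a := fun h => absurd ((P w).injective h) (Fin.ne_of_lt hab)
      have hwa : prefers (P w) a b := lt_of_le_of_ne (not_lt.mp hcon) (Ne.symm hne)
      have hapref : prefers (P a) a b := hnar a b (Fin.ne_of_lt hab)
      exact absurd (hsc a b a v w hav hvw' hapref hwa) (not_lt.mpr (le_of_lt hb))
  rw [← pos_card (P v) a, ← pos_card (P w) a]
  apply Finset.card_le_card
  intro b hb
  simp only [Finset.mem_filter, Finset.mem_univ, true_and] at hb ⊢
  exact key b hb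
end
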